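/- arXiv:1104.3047 — 3 statements merged into one kernel-verified Lean document; each statement's English description precedes it below -/
import Mathlib

section
/- For every nonnegative integer m, the sum over k from 0 to m of C(2k,k)^2 * C(4k,2k) * C(k, m-k) * (-64)^(m-k) equals the sum over k from 0 to m of C(2k,k) * C(4k,2k) * C(2(m-k), m-k) * C(4(m-k), 2(m-k)). -/
open Finset

def auxCB (n : ℕ) : ℤ := (Nat.choose (2*n) n : ℤ)
def auxA (k : ℕ) : ℤ := auxCB k * auxCB (2*k)
def auxB (k : ℕ) : ℤ := auxCB k ^ 2 * auxCB (2*k)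
def auxE (k m : ℕ) : ℤ := if k ≤ m then (Nat.choose k (m-k) : ℤ) * (-64)^(m-k) else 0
def auxN (p m : ℕ) : ℤ := ∑ k ∈ range (m+1), (k:ℤ)^p * auxB k * auxE k m
def auxM (p m : ℕ) : ℤ := ∑ k ∈ range (m+1), (k:ℤ)^p * auxA k * auxA (m-k)

lemma cb1 (k : ℕ) : ((k:ℤ)+1) * auxCB (k+1) = 2*(2*(k:ℤ)+1) * auxCB k := by
  have h := Nat.succ_mul_centralBinom_succ k
  simp only [Nat.centralBinom] at h
  have h' : ((k+1) * Nat.choose (2*(k+1)) (k+1) : ℤ) = (2 * (2*k+1) * Nat.choose (2*k) k : ℤ) := by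
    exact_mod_cast congrArg (Nat.cast : ℕ → ℤ) h
  simp only [auxCB]
  push_cast at h' ⊢
  linarith [h']

lemma cb2 (k : ℕ) : (2*(k:ℤ)+1)*(2*(k:ℤ)+2) * auxCB (2*k+2) = 4*(4*(k:ℤ)+3)*(4*(k:ℤ)+1) * auxCB (2*k) := by
  have h1 := cb1 (2*k+1)
  have h2 := cb1 (2*k)
  have e1 : 2*k+1+1 = 2*k+2 := by omega
  rw [e1] at h1
  push_cast at h1 h2
  linear_combination (2*(k:ℤ)+1) * h1 + 2*(2*(2*(k:ℤ)+1)+1) * h2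
lemma arec (k : ℕ) : ((k:ℤ)+1)^2 * auxA (k+1) = (64*(k:ℤ)^2+64*(k:ℤ)+12) * auxA k := by
  have hne : (2*(2*(k:ℤ)+1)) ≠ 0 := by positivity
  apply mul_left_cancel₀ hne
  have e1 : 2*(k+1) = 2*k+2 := by omega
  simp only [auxA, e1]
  linear_combination ((2*(k:ℤ)+1)*(2*(k:ℤ)+2)*auxCB (2*k+2)) * cb1 k + (2*(2*(k:ℤ)+1)*auxCB k) * cb2 k

lemma brec (k : ℕ) : ((k:ℤ)+1)^3 * auxB (k+1) = (256*(k:ℤ)^3+384*(k:ℤ)^2+176*(k:ℤ)+24) * auxB k := by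
  have hne : (2*(2*(k:ℤ)+1)) ≠ 0 := by positivity
  apply mul_left_cancel₀ hne
  have e1 : 2*(k+1) = 2*k+2 := by omega
  simp only [auxB, e1]
  linear_combination ((((k:ℤ)+1)*auxCB (k+1) + 2*(2*(k:ℤ)+1)*auxCB k) * ((2*(k:ℤ)+1)*(2*(k:ℤ)+2)*auxCB (2*k+2))) * cb1 k + ((2*(2*(k:ℤ)+1)*auxCB k)^2) * cb2 k

lemma eZero {k m : ℕ} (h : m < k) : auxE k m = 0 := by
  simp [auxE, Nat.not_le.mpr h]

lemma ee1 (k m : ℕ) : (2*(k:ℤ)+1-(m:ℤ)) * auxE (k+1) (m+1) = ((k:ℤ)+1) * auxE k m := by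
  by_cases hk : k ≤ m
  · obtain ⟨j, rfl⟩ := Nat.exists_eq_add_of_le hk
    have i1 : k + j + 1 - (k+1) = j := by omega
    have i2 : k + j - k = j := by omega
    simp only [auxE, if_pos (by omega : k+1 ≤ k+j+1), if_pos hk, i1, i2]
    by_cases hj : j ≤ k+1
    · have hnat := Nat.choose_mul_succ_eq k j
      have hc : (Nat.choose k j : ℤ) * ((k:ℤ)+1) = (Nat.choose (k+1) j : ℤ) * ((k:ℤ)+1-(j:ℤ)) := by
        have := congrArg (Nat.cast : ℕ → ℤ) hnat
        push_cast [Nat.cast_sub hj] at this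
        linarith [this]
      push_cast
      linear_combination (-((-64:ℤ)^j)) * hc
    · rw [Nat.choose_eq_zero_of_lt (by omega), Nat.choose_eq_zero_of_lt (by omega)]
      push_cast
      ring
  · rw [eZero (by omega), eZero (by omega)]
    ring

lemma ee2 (k m : ℕ) : ((k:ℤ)-(m:ℤ)-1) * auxE (k+1) (m+2) = 64*((k:ℤ)+1) * auxE k m := by
  by_cases hk : k ≤ m
  · obtain ⟨j, rfl⟩ := Nat.exists_eq_add_of_le hk
    have i1 : k + j + 2 - (k+1) = j+1 := by omega
    have i2 : k + j - k = j := by omega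
    simp only [auxE, if_pos (by omega : k+1 ≤ k+j+2), if_pos hk, i1, i2]
    have hnat := Nat.add_one_mul_choose_eq k j
    have hc : ((k:ℤ)+1) * (Nat.choose k j : ℤ) = (Nat.choose (k+1) (j+1) : ℤ) * ((j:ℤ)+1) := by
      exact_mod_cast congrArg (Nat.cast : ℕ → ℤ) hnat
    push_cast
    linear_combination (-(64:ℤ))*((-64:ℤ))^j * hc
  · by_cases hk2 : k = m+1
    · subst hk2
      have h0 : auxE (m+1) m = 0 := eZero (by omega)
      rw [h0]
      push_cast
      ring
    · rw [eZero (by omega : m < k), eZero (by omega : m+2 < k+1)]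
      ring
lemma r_sym (m : ℕ) : 2 * auxM 1 m = (m:ℤ) * auxM 0 m := by
  have h := Finset.sum_range_reflect (fun j => (j:ℤ)^1 * auxA j * auxA (m-j)) (m+1)
  simp only [Nat.add_sub_cancel] at h
  rw [two_mul, auxM, auxM]
  nth_rewrite 1 [← h]
  rw [← Finset.sum_add_distrib, Finset.mul_sum]
  refine Finset.sum_congr rfl fun k hk => ?_
  have hk'' : k < m + 1 := Finset.mem_range.mp hk
  have hk3 : k ≤ m := by omega
  have i1 : m - (m - k) = k := by omega
  rw [i1]
  have c1 : ((m-k:ℕ):ℤ) = (m:ℤ) - (k:ℤ) := by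
    push_cast [Nat.cast_sub hk3]; ring
  rw [c1]
  ring

lemma r_refl3 (m : ℕ) : 2 * auxM 3 m = (m:ℤ)^3 * auxM 0 m - 3*(m:ℤ)^2 * auxM 1 m + 3*(m:ℤ) * auxM 2 m := by
  have h := Finset.sum_range_reflect (fun j => (j:ℤ)^3 * auxA j * auxA (m-j)) (m+1)
  simp only [Nat.add_sub_cancel] at h
  have hr : (m:ℤ)^3 * auxM 0 m - 3*(m:ℤ)^2 * auxM 1 m + 3*(m:ℤ) * auxM 2 m
      = ∑ k ∈ range (m+1), ((m:ℤ)^3 - 3*(m:ℤ)^2*(k:ℤ) + 3*(m:ℤ)*(k:ℤ)^2) * (auxA k * auxA (m-k)) := by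
    simp only [auxM, Finset.mul_sum, ← Finset.sum_sub_distrib, ← Finset.sum_add_distrib]
    refine Finset.sum_congr rfl fun k hk => ?_
    ring
  rw [two_mul, auxM, hr]
  nth_rewrite 1 [← h]
  rw [← Finset.sum_add_distrib]
  refine Finset.sum_congr rfl fun k hk => ?_
  have hk'' : k < m + 1 := Finset.mem_range.mp hk
  have hk3 : k ≤ m := by omega
  have i1 : m - (m - k) = k := by omega
  rw [i1]
  have c1 : ((m-k:ℕ):ℤ) = (m:ℤ) - (k:ℤ) := by
    push_cast [Nat.cast_sub hk3]; ring
  rw [c1]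
  ring

lemma r_m3sym (m : ℕ) : 4 * auxM 3 m = 6*(m:ℤ) * auxM 2 m - (m:ℤ)^3 * auxM 0 m := by
  linear_combination 2 * r_refl3 m - 3*(m:ℤ)^2 * r_sym m

lemma r_E2 (m : ℕ) : auxM 2 (m+1) = 64 * auxM 2 m + 64 * auxM 1 m + 12 * auxM 0 m := by
  have hr : (64:ℤ) * auxM 2 m + 64 * auxM 1 m + 12 * auxM 0 m
      = ∑ j ∈ range (m+1), (64*(j:ℤ)^2 + 64*(j:ℤ) + 12) * (auxA j * auxA (m-j)) := by
    simp only [auxM, Finset.mul_sum, ← Finset.sum_add_distrib]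
    exact Finset.sum_congr rfl fun k _ => by ring
  rw [auxM, Finset.sum_range_succ', hr]
  have h0 : ((0:ℕ):ℤ)^2 * auxA 0 * auxA (m+1-0) = 0 := by norm_num
  rw [h0, add_zero]
  refine Finset.sum_congr rfl fun j hj => ?_
  have i1 : m + 1 - (j+1) = m - j := by omega
  rw [i1]
  push_cast
  linear_combination (auxA (m-j)) * arec j

lemma r_E3 (m : ℕ) : auxM 3 (m+1) = 64 * auxM 3 m + 128 * auxM 2 m + 76 * auxM 1 m + 12 * auxM 0 m := by
  have hr : (64:ℤ) * auxM 3 m + 128 * auxM 2 m + 76 * auxM 1 m + 12 * auxM 0 m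
      = ∑ j ∈ range (m+1), (64*(j:ℤ)^3 + 128*(j:ℤ)^2 + 76*(j:ℤ) + 12) * (auxA j * auxA (m-j)) := by
    simp only [auxM, Finset.mul_sum, ← Finset.sum_add_distrib]
    exact Finset.sum_congr rfl fun k _ => by ring
  rw [auxM, Finset.sum_range_succ', hr]
  have h0 : ((0:ℕ):ℤ)^3 * auxA 0 * auxA (m+1-0) = 0 := by norm_num
  rw [h0, add_zero]
  refine Finset.sum_congr rfl fun j hj => ?_
  have i1 : m + 1 - (j+1) = m - j := by omega
  rw [i1]
  push_cast
  linear_combination (((j:ℤ)+1) * auxA (m-j)) * arec j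

lemma recR (n : ℕ) : ((n:ℤ)+2)^3 * auxM 0 (n+2)
    = (128*(n:ℤ)^3+576*(n:ℤ)^2+880*(n:ℤ)+456) * auxM 0 (n+1)
      - 1024*((n:ℤ)+1)*(2*(n:ℤ)+1)*(2*(n:ℤ)+3) * auxM 0 n := by
  have hs0 := r_sym n
  have hs1 := r_sym (n+1)
  have hm0 := r_m3sym n
  have hm1 := r_m3sym (n+1)
  have hm2 := r_m3sym (n+2)
  have he20 := r_E2 n
  have he21 := r_E2 (n+1)
  have he30 := r_E3 n
  have he31 := r_E3 (n+1)
  have i1 : n+1+1 = n+2 := by omega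
  rw [i1] at he21 he31
  push_cast at hs1 hm1 hm2 he21 he31
  linear_combination (-6656-12288*(n:ℤ)) * hs0 + 4096 * hm0 + (232+192*(n:ℤ)) * hs1
    - 128 * hm1 + hm2 + (-512-384*(n:ℤ)) * he20 + 256 * he30 + (12+6*(n:ℤ)) * he21 - 4 * he31

lemma la2 (m : ℕ) : 2 * auxN 3 (m+1) - ((m:ℤ)+1) * auxN 2 (m+1)
    = 256*auxN 3 m + 384*auxN 2 m + 176*auxN 1 m + 24*auxN 0 m := by
  have hl : 2 * auxN 3 (m+1) - ((m:ℤ)+1) * auxN 2 (m+1)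
      = ∑ k ∈ range (m+1+1), ((k:ℤ)^2*(2*(k:ℤ)-((m:ℤ)+1))) * (auxB k * auxE k (m+1)) := by
    simp only [auxN, Finset.mul_sum, ← Finset.sum_sub_distrib]
    exact Finset.sum_congr rfl fun k _ => by ring
  have hr : 256*auxN 3 m + 384*auxN 2 m + 176*auxN 1 m + 24*auxN 0 m
      = ∑ j ∈ range (m+1), (256*(j:ℤ)^3+384*(j:ℤ)^2+176*(j:ℤ)+24) * (auxB j * auxE j m) := by
    simp only [auxN, Finset.mul_sum, ← Finset.sum_add_distrib]
    exact Finset.sum_congr rfl fun k _ => by ring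
  rw [hl, hr, Finset.sum_range_succ']
  have h0 : (((0:ℕ):ℤ)^2*(2*((0:ℕ):ℤ)-((m:ℤ)+1))) * (auxB 0 * auxE 0 (m+1)) = 0 := by norm_num
  rw [h0, add_zero]
  refine Finset.sum_congr rfl fun j _ => ?_
  push_cast
  linear_combination (((j:ℤ)+1)^2 * auxB (j+1)) * ee1 j m + ((1:ℤ) * auxE j m) * brec j

lemma la3 (m : ℕ) : 2 * auxN 4 (m+1) - ((m:ℤ)+1) * auxN 3 (m+1)
    = 256*auxN 4 m + 640*auxN 3 m + 560*auxN 2 m + 200*auxN 1 m + 24*auxN 0 m := by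
  have hl : 2 * auxN 4 (m+1) - ((m:ℤ)+1) * auxN 3 (m+1)
      = ∑ k ∈ range (m+1+1), ((k:ℤ)^3*(2*(k:ℤ)-((m:ℤ)+1))) * (auxB k * auxE k (m+1)) := by
    simp only [auxN, Finset.mul_sum, ← Finset.sum_sub_distrib]
    exact Finset.sum_congr rfl fun k _ => by ring
  have hr : 256*auxN 4 m + 640*auxN 3 m + 560*auxN 2 m + 200*auxN 1 m + 24*auxN 0 m
      = ∑ j ∈ range (m+1), (256*(j:ℤ)^4+640*(j:ℤ)^3+560*(j:ℤ)^2+200*(j:ℤ)+24) * (auxB j * auxE j m) := by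
    simp only [auxN, Finset.mul_sum, ← Finset.sum_add_distrib]
    exact Finset.sum_congr rfl fun k _ => by ring
  rw [hl, hr, Finset.sum_range_succ']
  have h0 : (((0:ℕ):ℤ)^3*(2*((0:ℕ):ℤ)-((m:ℤ)+1))) * (auxB 0 * auxE 0 (m+1)) = 0 := by norm_num
  rw [h0, add_zero]
  refine Finset.sum_congr rfl fun j _ => ?_
  push_cast
  linear_combination (((j:ℤ)+1)^3 * auxB (j+1)) * ee1 j m + (((j:ℤ)+1) * auxE j m) * brec j

lemma la4 (m : ℕ) : 2 * auxN 5 (m+1) - ((m:ℤ)+1) * auxN 4 (m+1)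
    = 256*auxN 5 m + 896*auxN 4 m + 1200*auxN 3 m + 760*auxN 2 m + 224*auxN 1 m + 24*auxN 0 m := by
  have hl : 2 * auxN 5 (m+1) - ((m:ℤ)+1) * auxN 4 (m+1)
      = ∑ k ∈ range (m+1+1), ((k:ℤ)^4*(2*(k:ℤ)-((m:ℤ)+1))) * (auxB k * auxE k (m+1)) := by
    simp only [auxN, Finset.mul_sum, ← Finset.sum_sub_distrib]
    exact Finset.sum_congr rfl fun k _ => by ring
  have hr : 256*auxN 5 m + 896*auxN 4 m + 1200*auxN 3 m + 760*auxN 2 m + 224*auxN 1 m + 24*auxN 0 m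
      = ∑ j ∈ range (m+1), (256*(j:ℤ)^5+896*(j:ℤ)^4+1200*(j:ℤ)^3+760*(j:ℤ)^2+224*(j:ℤ)+24) * (auxB j * auxE j m) := by
    simp only [auxN, Finset.mul_sum, ← Finset.sum_add_distrib]
    exact Finset.sum_congr rfl fun k _ => by ring
  rw [hl, hr, Finset.sum_range_succ']
  have h0 : (((0:ℕ):ℤ)^4*(2*((0:ℕ):ℤ)-((m:ℤ)+1))) * (auxB 0 * auxE 0 (m+1)) = 0 := by norm_num
  rw [h0, add_zero]
  refine Finset.sum_congr rfl fun j _ => ?_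
  push_cast
  linear_combination (((j:ℤ)+1)^4 * auxB (j+1)) * ee1 j m + ((((j:ℤ)+1)^2) * auxE j m) * brec j

lemma lb2 (m : ℕ) : auxN 3 (m+2) - ((m:ℤ)+2) * auxN 2 (m+2)
    = 64*(256*auxN 3 m + 384*auxN 2 m + 176*auxN 1 m + 24*auxN 0 m) := by
  have hl : auxN 3 (m+2) - ((m:ℤ)+2) * auxN 2 (m+2)
      = ∑ k ∈ range (m+2+1), ((k:ℤ)^2*((k:ℤ)-((m:ℤ)+2))) * (auxB k * auxE k (m+2)) := by
    simp only [auxN, Finset.mul_sum, ← Finset.sum_sub_distrib]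
    exact Finset.sum_congr rfl fun k _ => by ring
  have hr : (64:ℤ)*(256*auxN 3 m + 384*auxN 2 m + 176*auxN 1 m + 24*auxN 0 m)
      = ∑ j ∈ range (m+1), (64*(256*(j:ℤ)^3+384*(j:ℤ)^2+176*(j:ℤ)+24)) * (auxB j * auxE j m) := by
    simp only [auxN, Finset.mul_sum, ← Finset.sum_add_distrib]
    exact Finset.sum_congr rfl fun k _ => by ring
  have hext : ∑ j ∈ range (m+2), (64*(256*(j:ℤ)^3+384*(j:ℤ)^2+176*(j:ℤ)+24)) * (auxB j * auxE j m)
      = ∑ j ∈ range (m+1), (64*(256*(j:ℤ)^3+384*(j:ℤ)^2+176*(j:ℤ)+24)) * (auxB j * auxE j m) := by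
    rw [Finset.sum_range_succ, eZero (show m < m+1 by omega)]
    simp
  rw [hl, hr, ← hext, Finset.sum_range_succ']
  have h0 : (((0:ℕ):ℤ)^2*(((0:ℕ):ℤ)-((m:ℤ)+2))) * (auxB 0 * auxE 0 (m+2)) = 0 := by norm_num
  rw [h0, add_zero]
  refine Finset.sum_congr rfl fun j _ => ?_
  push_cast
  linear_combination (((j:ℤ)+1)^2 * auxB (j+1)) * ee2 j m + ((64:ℤ) * auxE j m) * brec j

lemma lb3 (m : ℕ) : auxN 4 (m+2) - ((m:ℤ)+2) * auxN 3 (m+2)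
    = 64*(256*auxN 4 m + 640*auxN 3 m + 560*auxN 2 m + 200*auxN 1 m + 24*auxN 0 m) := by
  have hl : auxN 4 (m+2) - ((m:ℤ)+2) * auxN 3 (m+2)
      = ∑ k ∈ range (m+2+1), ((k:ℤ)^3*((k:ℤ)-((m:ℤ)+2))) * (auxB k * auxE k (m+2)) := by
    simp only [auxN, Finset.mul_sum, ← Finset.sum_sub_distrib]
    exact Finset.sum_congr rfl fun k _ => by ring
  have hr : (64:ℤ)*(256*auxN 4 m + 640*auxN 3 m + 560*auxN 2 m + 200*auxN 1 m + 24*auxN 0 m)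
      = ∑ j ∈ range (m+1), (64*(256*(j:ℤ)^4+640*(j:ℤ)^3+560*(j:ℤ)^2+200*(j:ℤ)+24)) * (auxB j * auxE j m) := by
    simp only [auxN, Finset.mul_sum, ← Finset.sum_add_distrib]
    exact Finset.sum_congr rfl fun k _ => by ring
  have hext : ∑ j ∈ range (m+2), (64*(256*(j:ℤ)^4+640*(j:ℤ)^3+560*(j:ℤ)^2+200*(j:ℤ)+24)) * (auxB j * auxE j m)
      = ∑ j ∈ range (m+1), (64*(256*(j:ℤ)^4+640*(j:ℤ)^3+560*(j:ℤ)^2+200*(j:ℤ)+24)) * (auxB j * auxE j m) := by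
    rw [Finset.sum_range_succ, eZero (show m < m+1 by omega)]
    simp
  rw [hl, hr, ← hext, Finset.sum_range_succ']
  have h0 : (((0:ℕ):ℤ)^3*(((0:ℕ):ℤ)-((m:ℤ)+2))) * (auxB 0 * auxE 0 (m+2)) = 0 := by norm_num
  rw [h0, add_zero]
  refine Finset.sum_congr rfl fun j _ => ?_
  push_cast
  linear_combination (((j:ℤ)+1)^3 * auxB (j+1)) * ee2 j m + ((64*((j:ℤ)+1)) * auxE j m) * brec j

lemma lb4 (m : ℕ) : auxN 5 (m+2) - ((m:ℤ)+2) * auxN 4 (m+2)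
    = 64*(256*auxN 5 m + 896*auxN 4 m + 1200*auxN 3 m + 760*auxN 2 m + 224*auxN 1 m + 24*auxN 0 m) := by
  have hl : auxN 5 (m+2) - ((m:ℤ)+2) * auxN 4 (m+2)
      = ∑ k ∈ range (m+2+1), ((k:ℤ)^4*((k:ℤ)-((m:ℤ)+2))) * (auxB k * auxE k (m+2)) := by
    simp only [auxN, Finset.mul_sum, ← Finset.sum_sub_distrib]
    exact Finset.sum_congr rfl fun k _ => by ring
  have hr : (64:ℤ)*(256*auxN 5 m + 896*auxN 4 m + 1200*auxN 3 m + 760*auxN 2 m + 224*auxN 1 m + 24*auxN 0 m)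
      = ∑ j ∈ range (m+1), (64*(256*(j:ℤ)^5+896*(j:ℤ)^4+1200*(j:ℤ)^3+760*(j:ℤ)^2+224*(j:ℤ)+24)) * (auxB j * auxE j m) := by
    simp only [auxN, Finset.mul_sum, ← Finset.sum_add_distrib]
    exact Finset.sum_congr rfl fun k _ => by ring
  have hext : ∑ j ∈ range (m+2), (64*(256*(j:ℤ)^5+896*(j:ℤ)^4+1200*(j:ℤ)^3+760*(j:ℤ)^2+224*(j:ℤ)+24)) * (auxB j * auxE j m)
      = ∑ j ∈ range (m+1), (64*(256*(j:ℤ)^5+896*(j:ℤ)^4+1200*(j:ℤ)^3+760*(j:ℤ)^2+224*(j:ℤ)+24)) * (auxB j * auxE j m) := by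
    rw [Finset.sum_range_succ, eZero (show m < m+1 by omega)]
    simp
  rw [hl, hr, ← hext, Finset.sum_range_succ']
  have h0 : (((0:ℕ):ℤ)^4*(((0:ℕ):ℤ)-((m:ℤ)+2))) * (auxB 0 * auxE 0 (m+2)) = 0 := by norm_num
  rw [h0, add_zero]
  refine Finset.sum_congr rfl fun j _ => ?_
  push_cast
  linear_combination (((j:ℤ)+1)^4 * auxB (j+1)) * ee2 j m + ((64*((j:ℤ)+1)^2) * auxE j m) * brec j

lemma recL72 (n : ℕ) : 72*(((n:ℤ)+4)^3 * auxN 0 (n+4))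
    = 72*((128*(n:ℤ)^3+1344*(n:ℤ)^2+4720*(n:ℤ)+5544) * auxN 0 (n+3)
      - (4096*(n:ℤ)^3+36864*(n:ℤ)^2+109568*(n:ℤ)+107520) * auxN 0 (n+2)) := by
  have ha21 := la2 (n+1)
  have ha22 := la2 (n+2)
  have ha23 := la2 (n+3)
  have ha24 := la2 (n+4)
  have ha31 := la3 (n+1)
  have ha32 := la3 (n+2)
  have ha33 := la3 (n+3)
  have ha34 := la3 (n+4)
  have ha41 := la4 (n+1)
  have ha42 := la4 (n+2)
  have ha43 := la4 (n+3)
  have ha44 := la4 (n+4)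
  have hb21 := lb2 (n+1)
  have hb22 := lb2 (n+2)
  have hb23 := lb2 (n+3)
  have hb31 := lb3 (n+1)
  have hb32 := lb3 (n+2)
  have hb33 := lb3 (n+3)
  have hb41 := lb4 (n+1)
  have hb42 := lb4 (n+2)
  have hb43 := lb4 (n+3)
  simp only [show n+1+1 = n+2 by omega, show n+2+1 = n+3 by omega, show n+3+1 = n+4 by omega,
    show n+4+1 = n+5 by omega, show n+1+2 = n+3 by omega, show n+2+2 = n+4 by omega,
    show n+3+2 = n+5 by omega] at ha21 ha22 ha23 ha24 ha31 ha32 ha33 ha34 ha41 ha42 ha43 ha44 hb21 hb22 hb23 hb31 hb32 hb33 hb41 hb42 hb43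
  push_cast at ha21 ha22 ha23 ha24 ha31 ha32 ha33 ha34 ha41 ha42 ha43 ha44 hb21 hb22 hb23 hb31 hb32 hb33 hb41 hb42 hb43
  linear_combination ((-121602048) + (-73662464)*(n:ℤ) + (-11141120)*(n:ℤ)^2) * ha21
    + ((2650112) + (1358848)*(n:ℤ) + (174080)*(n:ℤ)^2) * ha22
    + ((73992) + (61744)*(n:ℤ) + (17216)*(n:ℤ)^2 + (1600)*(n:ℤ)^3) * ha23
    + ((-1940) + (-1373)*(n:ℤ) + (-322)*(n:ℤ)^2 + (-25)*(n:ℤ)^3) * ha24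
    + ((-353894400) + (-210763776)*(n:ℤ) + (-31457280)*(n:ℤ)^2) * ha31
    + ((7569408) + (3858432)*(n:ℤ) + (491520)*(n:ℤ)^2) * ha32
    + ((-82608) + (-64736)*(n:ℤ) + (-16704)*(n:ℤ)^2 + (-1408)*(n:ℤ)^3) * ha33
    + ((2088) + (1402)*(n:ℤ) + (308)*(n:ℤ)^2 + (22)*(n:ℤ)^3) * ha34
    + ((-262668288) + (-155189248)*(n:ℤ) + (-23068672)*(n:ℤ)^2) * ha41
    + ((5570560) + (2834432)*(n:ℤ) + (360448)*(n:ℤ)^2) * ha42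
    + ((16032) + (9472)*(n:ℤ) + (1408)*(n:ℤ)^2) * ha43
    + ((-340) + (-173)*(n:ℤ) + (-22)*(n:ℤ)^2) * ha44
    + ((1900032) + (1150976)*(n:ℤ) + (174080)*(n:ℤ)^2) * hb21
    + ((-115472) + (-82976)*(n:ℤ) + (-19936)*(n:ℤ)^2 + (-1600)*(n:ℤ)^3) * hb22
    + ((1940) + (1373)*(n:ℤ) + (322)*(n:ℤ)^2 + (25)*(n:ℤ)^3) * hb23
    + ((5529600) + (3293184)*(n:ℤ) + (491520)*(n:ℤ)^2) * hb31
    + ((-17184) + (15264)*(n:ℤ) + (10624)*(n:ℤ)^2 + (1408)*(n:ℤ)^3) * hb32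
    + ((-2476) + (-1599)*(n:ℤ) + (-333)*(n:ℤ)^2 + (-22)*(n:ℤ)^3) * hb33
    + ((4104192) + (2424832)*(n:ℤ) + (360448)*(n:ℤ)^2) * hb41
    + ((-119104) + (-63232)*(n:ℤ) + (-8448)*(n:ℤ)^2) * hb42
    + ((680) + (346)*(n:ℤ) + (44)*(n:ℤ)^2) * hb43

lemma recL (n : ℕ) : ((n:ℤ)+4)^3 * auxN 0 (n+4)
    = (128*(n:ℤ)^3+1344*(n:ℤ)^2+4720*(n:ℤ)+5544) * auxN 0 (n+3)
      - (4096*(n:ℤ)^3+36864*(n:ℤ)^2+109568*(n:ℤ)+107520) * auxN 0 (n+2) :=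
  mul_left_cancel₀ (by norm_num : (72:ℤ) ≠ 0) (recL72 n)

lemma baseNM : auxN 0 0 = auxM 0 0 ∧ auxN 0 1 = auxM 0 1 ∧ auxN 0 2 = auxM 0 2 ∧ auxN 0 3 = auxM 0 3 := by
  refine ⟨?_, ?_, ?_, ?_⟩ <;>
  · simp only [auxN, auxM, auxB, auxA, auxE, auxCB, Finset.sum_range_succ, Finset.sum_range_zero]
    norm_num [Nat.choose]

lemma mainNM (m : ℕ) : auxN 0 m = auxM 0 m := by
  induction m using Nat.strong_induction_on with
  | _ m ih =>
    match m, ih with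
    | 0, _ => exact baseNM.1
    | 1, _ => exact baseNM.2.1
    | 2, _ => exact baseNM.2.2.1
    | 3, _ => exact baseNM.2.2.2
    | (k+4), ih =>
      have hL := recL k
      have hR := recR (k+2)
      have i1 : k+2+1 = k+3 := by omega
      have i2 : k+2+2 = k+4 := by omega
      rw [i1, i2] at hR
      push_cast at hR
      have ih3 : auxN 0 (k+3) = auxM 0 (k+3) := ih (k+3) (by omega)
      have ih2 : auxN 0 (k+2) = auxM 0 (k+2) := ih (k+2) (by omega)
      have key : ((k:ℤ)+4)^3 * auxN 0 (k+4) = ((k:ℤ)+4)^3 * auxM 0 (k+4) := by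
        linear_combination hL - hR + (128*(k:ℤ)^3+1344*(k:ℤ)^2+4720*(k:ℤ)+5544) * ih3
          - (4096*(k:ℤ)^3+36864*(k:ℤ)^2+109568*(k:ℤ)+107520) * ih2
      exact mul_left_cancel₀ (by positivity) key

theorem stmt_0 (m : ℕ) :
    (∑ k ∈ Finset.range (m + 1),
      ((Nat.choose (2 * k) k : ℤ))^2 * (Nat.choose (4 * k) (2 * k)) *
        (Nat.choose k (m - k)) * (-64 : ℤ)^(m - k))
    = ∑ k ∈ Finset.range (m + 1),
      ((Nat.choose (2 * k) k : ℤ)) * (Nat.choose (4 * k) (2 * k)) *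
        (Nat.choose (2 * (m - k)) (m - k)) * (Nat.choose (4 * (m - k)) (2 * (m - k))) := by
  have hL : auxN 0 m = ∑ k ∈ Finset.range (m + 1),
      ((Nat.choose (2 * k) k : ℤ))^2 * (Nat.choose (4 * k) (2 * k)) *
        (Nat.choose k (m - k)) * (-64 : ℤ)^(m - k) := by
    refine Finset.sum_congr rfl fun k hk => ?_
    have hk' : k ≤ m := by
      have := Finset.mem_range.mp hk; omega
    simp only [auxB, auxE, auxCB, if_pos hk', pow_zero, one_mul]
    rw [show 2*(2*k) = 4*k by ring]
    ring
  have hR : auxM 0 m = ∑ k ∈ Finset.range (m + 1),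
      ((Nat.choose (2 * k) k : ℤ)) * (Nat.choose (4 * k) (2 * k)) *
        (Nat.choose (2 * (m - k)) (m - k)) * (Nat.choose (4 * (m - k)) (2 * (m - k))) := by
    refine Finset.sum_congr rfl fun k hk => ?_
    simp only [auxA, auxCB, pow_zero, one_mul]
    rw [show 2*(2*k) = 4*k by ring, show 2*(2*(m-k)) = 4*(m-k) by ring]
    ring
  rw [← hL, ← hR]
  exact mainNM m
end

section
/- Let p be an odd prime and let k be an integer with 3p/4 <= k <= p-1. Then C(2k,k) * C(4k,2k) is congruent to 0 modulo p^2. -/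
theorem stmt_2 (p k : ℕ) (hp : p.Prime) (hodd : Odd p)
    (h1 : 3 * p ≤ 4 * k) (h2 : k ≤ p - 1) :
    p^2 ∣ Nat.choose (2 * k) k * Nat.choose (4 * k) (2 * k) := by
  haveI := Fact.mk hp
  have hp2 : 2 ≤ p := hp.two_le
  have hkp : k < p := by omega
  have hd1 : p ∣ Nat.choose (2 * k) k := by
    have := hp.dvd_choose_add (a := k) (b := k) hkp hkp (by omega)
    rwa [show k + k = 2 * k by ring] at this
  have hmod4 : (4 * k) % p = 4 * k - 3 * p := by
    conv_lhs => rw [show 4 * k = (4 * k - 3 * p) + 3 * p by omega]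
    rw [Nat.add_mul_mod_self_right]
    exact Nat.mod_eq_of_lt (by omega)
  have hmod2 : (2 * k) % p = 2 * k - p := by
    conv_lhs => rw [show 2 * k = (2 * k - p) + 1 * p by omega]
    rw [Nat.add_mul_mod_self_right]
    exact Nat.mod_eq_of_lt (by omega)
  have hd2 : p ∣ Nat.choose (4 * k) (2 * k) := by
    have hl := Choose.choose_modEq_choose_mod_mul_choose_div_nat
      (n := 4 * k) (k := 2 * k) (p := p)
    have hc0 : Nat.choose ((4 * k) % p) ((2 * k) % p) = 0 := by
      rw [hmod4, hmod2]
      exact Nat.choose_eq_zero_of_lt (by omega)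
    rw [hc0, zero_mul] at hl
    exact (Nat.modEq_zero_iff_dvd).mp hl
  have := mul_dvd_mul hd1 hd2
  rwa [← pow_two] at this
end

section
/- Let p be an odd prime and let k, r be integers with 0 <= k <= p-1 and p-k <= r <= p-1. Then C(2k,k) * C(4k,2k) * C(2r,r) * C(4r,2r) is congruent to 0 modulo p^2. -/
open Finset in
lemma aux_dvd_choose_4m {p m : ℕ} (hp : p.Prime) (hp2 : p ≠ 2) (hm : m ≤ p - 1)
    (hm3 : 3 * p < 4 * m) : p ∣ Nat.choose (4 * m) (2 * m) := by
  have hp3 : 3 ≤ p := by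
    have := hp.two_le; omega
  have hm0 : 1 ≤ m := by omega
  have hpp : 4 * m < p ^ 2 := by
    rcases Nat.lt_or_ge p 4 with h | h
    · interval_cases p <;> omega
    · have h1 : 4 * p ≤ p * p := Nat.mul_le_mul_right p h
      have h2 : p ^ 2 = p * p := sq p
      omega
  have hlog : Nat.log p (4 * m) < 2 := Nat.log_lt_of_lt_pow (Nat.mul_ne_zero (by norm_num) (by omega)) hpp
  have h := Nat.Prime.emultiplicity_choose (n := 4 * m) (k := 2 * m) (b := 2) hp (by omega) hlog
  have hmod : (2 * m) % p = 2 * m - p := by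
    rw [Nat.mod_eq_sub_mod (by omega), Nat.mod_eq_of_lt (by omega)]
  have hcond : p ^ 1 ≤ (2 * m) % p ^ 1 + (4 * m - 2 * m) % p ^ 1 := by
    have h4 : 4 * m - 2 * m = 2 * m := by omega
    rw [h4, pow_one, hmod]
    omega
  have hmem : (1 : ℕ) ∈ {i ∈ Ico 1 2 | p ^ i ≤ (2*m) % p ^ i + (4*m - 2*m) % p ^ i} := by
    simp only [mem_filter, mem_Ico]
    exact ⟨⟨le_refl 1, by omega⟩, hcond⟩
  have hcard : 1 ≤ #{i ∈ Ico 1 2 | p ^ i ≤ (2*m) % p ^ i + (4*m - 2*m) % p ^ i} :=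
    Finset.card_pos.mpr ⟨1, hmem⟩
  have : (1 : ℕ∞) ≤ emultiplicity p (Nat.choose (4 * m) (2 * m)) := by
    rw [h]
    exact_mod_cast hcard
  have := pow_dvd_of_le_emultiplicity this
  simpa using this

theorem stmt_3 (p k r : ℕ) (hp : p.Prime) (hodd : Odd p)
    (hk : k ≤ p - 1) (hr1 : p - k ≤ r) (hr2 : r ≤ p - 1) :
    p^2 ∣ Nat.choose (2 * k) k * Nat.choose (4 * k) (2 * k) *
      (Nat.choose (2 * r) r * Nat.choose (4 * r) (2 * r)) := by
  have hp2 : p ≠ 2 := by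
    rintro rfl; exact (Nat.not_odd_iff_even.mpr even_two) hodd
  have hp3 : 3 ≤ p := by have := hp.two_le; omega
  have hk1 : 1 ≤ k := by omega
  have hr0 : 1 ≤ r := by omega
  have hsq : p ^ 2 = p * p := sq p
  -- basic divisibility facts
  have d2 : ∀ m : ℕ, p ≤ 2 * m → m ≤ p - 1 → p ∣ Nat.choose (2 * m) m := by
    intro m h1 h2
    exact hp.dvd_choose (by omega) (by omega) h1
  have d4 : ∀ m : ℕ, p ≤ 4 * m → 2 * m < p → p ∣ Nat.choose (4 * m) (2 * m) := by
    intro m h1 h2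
    exact hp.dvd_choose (by omega) (by omega) h1
  rw [hsq]
  by_cases hk2 : p ≤ 2 * k
  · by_cases hr2p : p ≤ 2 * r
    · exact mul_dvd_mul (Dvd.dvd.mul_right (d2 k hk2 hk) _)
        (Dvd.dvd.mul_right (d2 r hr2p hr2) _)
    · -- 2r < p
      by_cases hr4 : p ≤ 4 * r
      · exact mul_dvd_mul (Dvd.dvd.mul_right (d2 k hk2 hk) _)
          (Dvd.dvd.mul_left (d4 r hr4 (by omega)) _)
      · -- 4r < p, so 4k > 3p
        have hk3 : 3 * p < 4 * k := by omega
        exact Dvd.dvd.mul_right (mul_dvd_mul (d2 k hk2 hk)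
          (aux_dvd_choose_4m hp hp2 hk hk3)) _
  · -- 2k < p, so 2r ≥ 2(p-k) > p
    have hr2p : p ≤ 2 * r := by omega
    by_cases hk4 : p ≤ 4 * k
    · exact mul_dvd_mul (Dvd.dvd.mul_left (d4 k hk4 (by omega)) _)
        (Dvd.dvd.mul_right (d2 r hr2p hr2) _)
    · -- 4k < p, so 4r > 3p
      have hr3 : 3 * p < 4 * r := by omega
      exact Dvd.dvd.mul_left (mul_dvd_mul (d2 r hr2p hr2)
        (aux_dvd_choose_4m hp hp2 hr2 hr3)) _
end
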